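/- Let R(t) be a monic polynomial with integer coefficients having at least one complex root of absolute value strictly greater than 1, let S(t) be a polynomial with integer coefficients, and for each integer n ≥ 1 set Q_n(t) = t^n R(t) + S(t). Then the maximal absolute value λ(Q_n) of the complex roots of Q_n converges to λ(R) as n → ∞, i.e., for every ε > 0 there exists N such that for all n ≥ N, Q_n is a nonconstant polynomial and |λ(Q_n) − λ(R)| < ε. -/

import Mathlib

open Polynomial

/-- For an integer polynomial `f`, the maximal absolute value of its complex roots. -/
noncomputable def maxRootAbs (f : Polynomial ℤ) : ℝ :=
  sSup ((fun z : ℂ => ‖z‖) '' {z : ℂ | Polynomial.aeval z f = 0})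

noncomputable def Complex.abs : AbsoluteValue ℂ ℝ := NormedField.toAbsoluteValue ℂ

lemma Complex.norm_eq_abs (z : ℂ) : ‖z‖ = Complex.abs z := rfl

lemma Complex.abs_conj (z : ℂ) : Complex.abs ((starRingEnd ℂ) z) = Complex.abs z :=
  Complex.norm_conj z

lemma Complex.abs_ofReal (x : ℝ) : Complex.abs (x : ℂ) = |x| := Complex.norm_real x



noncomputable def geomPS (b : ℂ) : PowerSeries ℂ := PowerSeries.mk fun k => b ^ k

lemma geomPS_mul (b : ℂ) : (1 - PowerSeries.C b * PowerSeries.X) * geomPS b = 1 := by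
  ext k
  rw [sub_mul, one_mul, mul_assoc]
  cases k with
  | zero => simp [geomPS, PowerSeries.coeff_zero_X_mul]
  | succ k =>
      simp [geomPS, PowerSeries.coeff_C_mul, PowerSeries.coeff_succ_X_mul,
        PowerSeries.coeff_mk, PowerSeries.coeff_one, pow_succ, mul_comm]

noncomputable def GPS (M : Multiset ℂ) : PowerSeries ℂ :=
  (M.map (fun b => 1 - PowerSeries.C b * PowerSeries.X)).prod

noncomputable def SPS (M : Multiset ℂ) : PowerSeries ℂ :=
  (M.map (fun b => (-PowerSeries.C b) * geomPS b)).sum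

lemma GPS_cons (b : ℂ) (M : Multiset ℂ) :
    GPS (b ::ₘ M) = (1 - PowerSeries.C b * PowerSeries.X) * GPS M := by
  simp [GPS]

lemma constCoeff_GPS (M : Multiset ℂ) : PowerSeries.constantCoeff (GPS M) = 1 := by
  induction M using Multiset.induction with
  | empty => simp [GPS]
  | cons b M ih => simp [GPS_cons, map_mul, ih]

lemma deriv_one_sub (b : ℂ) :
    PowerSeries.derivativeFun (1 - PowerSeries.C b * PowerSeries.X) = - PowerSeries.C b := by
  ext k
  rw [show ∀ f : PowerSeries ℂ, f.derivativeFun = PowerSeries.derivative ℂ f from fun _ => rfl,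
    PowerSeries.coeff_derivative]
  cases k with
  | zero => simp
  | succ k =>
      simp [PowerSeries.coeff_C_mul, PowerSeries.coeff_succ_X_mul, PowerSeries.coeff_C]

lemma GPS_deriv (M : Multiset ℂ) :
    PowerSeries.derivativeFun (GPS M) = GPS M * SPS M := by
  induction M using Multiset.induction with
  | empty => simp [GPS, SPS, PowerSeries.derivativeFun_one]
  | cons b M ih =>
      rw [GPS_cons, PowerSeries.derivativeFun_mul, deriv_one_sub, ih]
      have hS : SPS (b ::ₘ M) = (-PowerSeries.C b) * geomPS b + SPS M := by
        simp [SPS]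
      rw [hS]
      have key : (1 - PowerSeries.C b * PowerSeries.X) * (GPS M * ((-PowerSeries.C b) * geomPS b))
          = GPS M * (- PowerSeries.C b) := by
        calc (1 - PowerSeries.C b * PowerSeries.X) * (GPS M * ((-PowerSeries.C b) * geomPS b))
            = GPS M * (- PowerSeries.C b) * ((1 - PowerSeries.C b * PowerSeries.X) * geomPS b) := by
              ring
          _ = GPS M * (- PowerSeries.C b) := by rw [geomPS_mul b, mul_one]
      rw [smul_eq_mul, smul_eq_mul]
      calc (1 - PowerSeries.C b * PowerSeries.X) * (GPS M * SPS M)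
            + GPS M * (- PowerSeries.C b)
          = (1 - PowerSeries.C b * PowerSeries.X) * (GPS M * SPS M)
            + (1 - PowerSeries.C b * PowerSeries.X) * (GPS M * ((-PowerSeries.C b) * geomPS b)) := by
            rw [key]
        _ = (1 - PowerSeries.C b * PowerSeries.X) * GPS M * ((-PowerSeries.C b) * geomPS b + SPS M) := by
            ring

noncomputable def psum (M : Multiset ℂ) (k : ℕ) : ℂ := (M.map (fun x => x ^ k)).sum

lemma coeff_SPS (M : Multiset ℂ) (j : ℕ) :
    PowerSeries.coeff j (SPS M) = - psum M (j + 1) := by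
  rw [SPS, psum, map_multiset_sum, Multiset.map_map]
  have : ∀ b : ℂ, (PowerSeries.coeff j) ((-PowerSeries.C b) * geomPS b) = -(b ^ (j+1)) := by
    intro b
    rw [neg_mul, map_neg, PowerSeries.coeff_C_mul, geomPS, PowerSeries.coeff_mk, pow_succ,
      mul_comm]
  simp only [Function.comp, this]
  induction M using Multiset.induction with
  | empty => simp
  | cons b M ih => simp [ih]; ring

lemma psum_congr (M₁ M₂ : Multiset ℂ) (N : ℕ)
    (h : ∀ j, j < N → PowerSeries.coeff j (GPS M₁) = PowerSeries.coeff j (GPS M₂)) :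
    ∀ k, 1 ≤ k → k < N → psum M₁ k = psum M₂ k := by
  intro k hk1 hkN
  have hdvd : (PowerSeries.X : PowerSeries ℂ) ^ N ∣ (GPS M₁ - GPS M₂) := by
    rw [PowerSeries.X_pow_dvd_iff]
    intro m hm
    rw [map_sub, h m hm, sub_self]
  obtain ⟨e, he⟩ := hdvd
  have hd1 : (PowerSeries.X : PowerSeries ℂ) ^ (N-1) ∣
      PowerSeries.derivativeFun ((PowerSeries.X : PowerSeries ℂ) ^ N * e) := by
    rw [PowerSeries.X_pow_dvd_iff]
    intro m hm
    rw [show ∀ f : PowerSeries ℂ, f.derivativeFun = PowerSeries.derivative ℂ f from fun _ => rfl,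
    PowerSeries.coeff_derivative]
    have h2 : PowerSeries.coeff (m+1) ((PowerSeries.X : PowerSeries ℂ) ^ N * e) = 0 := by
      have h3 := dvd_mul_right ((PowerSeries.X : PowerSeries ℂ) ^ N) e
      rw [PowerSeries.X_pow_dvd_iff] at h3
      exact h3 _ (by omega)
    rw [h2, zero_mul]
  have hd2 : (PowerSeries.X : PowerSeries ℂ) ^ (N-1) ∣ ((PowerSeries.X : PowerSeries ℂ) ^ N * e) :=
    (pow_dvd_pow PowerSeries.X (by omega)).trans (dvd_mul_right _ _)
  have h1 : GPS M₁ = GPS M₂ + (PowerSeries.X : PowerSeries ℂ) ^ N * e := by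
    rw [← he]; ring
  have key : GPS M₁ * GPS M₂ * (SPS M₁ - SPS M₂)
      = PowerSeries.derivativeFun ((PowerSeries.X : PowerSeries ℂ) ^ N * e) * GPS M₂
        - ((PowerSeries.X : PowerSeries ℂ) ^ N * e) * PowerSeries.derivativeFun (GPS M₂) := by
    have hD : PowerSeries.derivativeFun (GPS M₁)
        = PowerSeries.derivativeFun (GPS M₂)
          + PowerSeries.derivativeFun ((PowerSeries.X : PowerSeries ℂ) ^ N * e) := by
      rw [h1, PowerSeries.derivativeFun_add]
    calc GPS M₁ * GPS M₂ * (SPS M₁ - SPS M₂)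
        = (GPS M₁ * SPS M₁) * GPS M₂ - (GPS M₂ * SPS M₂) * GPS M₁ := by ring
      _ = PowerSeries.derivativeFun (GPS M₁) * GPS M₂
          - PowerSeries.derivativeFun (GPS M₂) * GPS M₁ := by rw [GPS_deriv, GPS_deriv]
      _ = _ := by rw [hD, h1]; ring
  have hdvd2 : (PowerSeries.X : PowerSeries ℂ) ^ (N-1) ∣ GPS M₁ * GPS M₂ * (SPS M₁ - SPS M₂) := by
    rw [key]
    exact dvd_sub (hd1.mul_right _) (hd2.mul_right _)
  have hu : IsUnit (GPS M₁ * GPS M₂) := by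
    rw [PowerSeries.isUnit_iff_constantCoeff, map_mul, constCoeff_GPS, constCoeff_GPS, mul_one]
    exact isUnit_one
  obtain ⟨u, hu⟩ := hu
  have hdvd3 : (PowerSeries.X : PowerSeries ℂ) ^ (N-1) ∣ (SPS M₁ - SPS M₂) := by
    have h4 := hdvd2.mul_left (↑u⁻¹ : PowerSeries ℂ)
    have h5 : (↑u⁻¹ : PowerSeries ℂ) * (GPS M₁ * GPS M₂ * (SPS M₁ - SPS M₂))
        = SPS M₁ - SPS M₂ := by
      rw [← hu, ← mul_assoc, Units.inv_mul, one_mul]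
    rwa [h5] at h4
  rw [PowerSeries.X_pow_dvd_iff] at hdvd3
  have h6 := hdvd3 (k-1) (by omega)
  rw [map_sub, coeff_SPS, coeff_SPS] at h6
  have h7 : k - 1 + 1 = k := by omega
  rw [h7] at h6
  linear_combination -h6

lemma reverse_X_sub_C (a : ℂ) : (X - Polynomial.C a).reverse = 1 - Polynomial.C a * X := by
  ext n
  rw [Polynomial.coeff_reverse, natDegree_X_sub_C]
  match n with
  | 0 =>
      rw [Polynomial.revAt_le (by omega)]
      simp
  | 1 =>
      rw [Polynomial.revAt_le (by omega)]
      simp [Polynomial.coeff_one]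
  | (n+2) =>
      rw [Polynomial.revAt_eq_self_of_lt (by omega)]
      simp [Polynomial.coeff_X, Polynomial.coeff_C, Polynomial.coeff_one]

lemma reverse_prod_eq (M : Multiset ℂ) :
    ((M.map fun a => (X - Polynomial.C a)).prod).reverse
      = ((M.map fun a => 1 - Polynomial.C a * X)).prod := by
  induction M using Multiset.induction with
  | empty =>
      simp only [Multiset.map_zero, Multiset.prod_zero]
      rw [← Polynomial.C_1, Polynomial.reverse_C]
  | cons a M ih =>
      simp only [Multiset.map_cons, Multiset.prod_cons]
      rw [Polynomial.reverse_mul_of_domain, ih, reverse_X_sub_C]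

lemma coe_GPS (M : Multiset ℂ) :
    (((M.map fun a => 1 - Polynomial.C a * X).prod : Polynomial ℂ) : PowerSeries ℂ) = GPS M := by
  induction M using Multiset.induction with
  | empty => simp [GPS]
  | cons a M ih =>
      simp only [Multiset.map_cons, Multiset.prod_cons, GPS] at *
      push_cast
      rw [ih]

lemma GPS_roots (f : Polynomial ℂ) (hf : f.Monic) :
    ((f.reverse : Polynomial ℂ) : PowerSeries ℂ) = GPS f.roots := by
  conv_lhs => rw [(IsAlgClosed.splits f).eq_prod_roots_of_monic hf]
  rw [reverse_prod_eq, coe_GPS]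

lemma qn_monic {A : Type*} [CommRing A] [Nontrivial A] (R S : A[X]) (hR : R.Monic)
    (n : ℕ) (h : S.natDegree + 1 ≤ n + R.natDegree) :
    (X ^ n * R + S).Monic ∧ (X ^ n * R + S).natDegree = n + R.natDegree := by
  have hm : (X ^ n * R : A[X]).Monic := (monic_X_pow n).mul hR
  have hdeg : (X ^ n * R : A[X]).natDegree = n + R.natDegree := by
    rw [(monic_X_pow n).natDegree_mul hR, natDegree_X_pow]
  have hlt : S.degree < (X ^ n * R : A[X]).degree := by
    apply lt_of_le_of_lt (degree_le_natDegree)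
    rw [degree_eq_natDegree hm.ne_zero, hdeg]
    exact_mod_cast WithBot.coe_lt_coe.mpr (by omega)
  constructor
  · exact hm.add_of_left hlt
  · rw [natDegree_eq_of_degree_eq (degree_add_eq_left_of_degree_lt hlt), hdeg]

lemma coeff_reverse_agree (Rc Sc : Polynomial ℂ) (hRc : Rc.Monic) (n : ℕ)
    (h : Sc.natDegree + 1 ≤ n + Rc.natDegree) :
    ∀ j, j + Sc.natDegree < n + Rc.natDegree →
      (X ^ n * Rc + Sc).reverse.coeff j = Rc.reverse.coeff j := by
  intro j hj
  have hq := qn_monic Rc Sc hRc n h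
  rw [Polynomial.coeff_reverse, Polynomial.coeff_reverse, hq.2]
  by_cases hjd : j ≤ Rc.natDegree
  · rw [Polynomial.revAt_le (by omega), Polynomial.revAt_le hjd, Polynomial.coeff_add,
      coeff_eq_zero_of_natDegree_lt (show Sc.natDegree < n + Rc.natDegree - j by omega), add_zero,
      mul_comm, Polynomial.coeff_mul_X_pow', if_pos (by omega)]
    congr 1
    omega
  · rw [Polynomial.revAt_le (by omega), Polynomial.revAt_eq_self_of_lt (by omega),
      Polynomial.coeff_add,
      coeff_eq_zero_of_natDegree_lt (show Sc.natDegree < n + Rc.natDegree - j by omega), add_zero,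
      mul_comm, Polynomial.coeff_mul_X_pow', if_neg (by omega),
      coeff_eq_zero_of_natDegree_lt (show Rc.natDegree < j by omega)]

lemma psum_roots_eq (Rc Sc : Polynomial ℂ) (hRc : Rc.Monic) (n : ℕ)
    (h : Sc.natDegree + 1 ≤ n + Rc.natDegree) :
    ∀ k, 1 ≤ k → k + Sc.natDegree < n + Rc.natDegree →
      psum (X ^ n * Rc + Sc).roots k = psum Rc.roots k := by
  intro k hk1 hk2
  apply psum_congr _ _ (n + Rc.natDegree - Sc.natDegree) ?_ k hk1 (by omega)
  intro j hj
  rw [← GPS_roots _ (qn_monic Rc Sc hRc n h).1, ← GPS_roots _ hRc,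
    Polynomial.coeff_coe, Polynomial.coeff_coe]
  exact coeff_reverse_agree Rc Sc hRc n h j (by omega)



lemma window_lemma (r : ℕ) (hr : 1 ≤ r) (u : ℕ → ℂ)
    (hu : ∀ i, i < r → Complex.abs (u i) = 1) :
    ∃ K : ℕ, 1 ≤ K ∧ ∀ m : ℕ, ∃ k, m ≤ k ∧ k < m + K ∧
      (1/2 : ℝ) ≤ Complex.abs (∑ i ∈ Finset.range r, u i ^ k) := by
  classical
  set w : ℕ → ℕ → ℂ := fun i j => u i * (starRingEnd ℂ) (u j) with hw
  have hself : ∀ j, j < r → u j * (starRingEnd ℂ) (u j) = 1 := by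
    intro j hj
    rw [Complex.mul_conj]
    norm_cast
    rw [Complex.normSq_eq_norm_sq, Complex.norm_eq_abs, hu j hj]
    norm_num
  have hwabs : ∀ i j, i < r → j < r → Complex.abs (w i j) = 1 := by
    intro i j hi hj
    simp only [hw, map_mul, Complex.abs_conj, hu i hi, hu j hj, mul_one]
  have hweq : ∀ i j, i < r → j < r → u i = u j → w i j = 1 := by
    intro i j hi hj h
    rw [hw]
    simp only
    rw [h]
    exact hself j hj
  have hwne : ∀ i j, i < r → j < r → u i ≠ u j → w i j ≠ 1 := by
    intro i j hi hj hne heq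
    apply hne
    have hcne : (starRingEnd ℂ) (u j) ≠ 0 := by
      intro h0
      have := hself j hj
      rw [h0, mul_zero] at this
      exact one_ne_zero this.symm
    have h1 : (u i - u j) * (starRingEnd ℂ) (u j) = 0 := by
      rw [sub_mul]
      have h2 : u i * (starRingEnd ℂ) (u j) = 1 := heq
      rw [h2, hself j hj, sub_self]
    rcases mul_eq_zero.mp h1 with h | h
    · exact sub_eq_zero.mp h
    · exact absurd h hcne
  set c : ℕ → ℕ → ℝ := fun i j => if u i = u j then 0 else 2 / Complex.abs (w i j - 1) with hc
  have hcnonneg : ∀ i j, 0 ≤ c i j := by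
    intro i j
    rw [hc]
    dsimp only
    split
    · exact le_refl 0
    · positivity
  set C : ℝ := ∑ i ∈ Finset.range r, ∑ j ∈ Finset.range r, c i j with hC
  have hCnonneg : 0 ≤ C :=
    Finset.sum_nonneg fun i _ => Finset.sum_nonneg fun j _ => hcnonneg i j
  refine ⟨⌈C⌉₊ * 2 + 2, by omega, ?_⟩
  intro m
  set K := ⌈C⌉₊ * 2 + 2 with hK
  by_contra hcon
  push_neg at hcon
  set σ : ℕ → ℂ := fun k => ∑ i ∈ Finset.range r, u i ^ k with hσ
  have key : ∀ k, Complex.normSq (σ k)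
      = ∑ i ∈ Finset.range r, ∑ j ∈ Finset.range r, ((w i j) ^ k).re := by
    intro k
    have h1 : (σ k) * (starRingEnd ℂ) (σ k)
        = ∑ i ∈ Finset.range r, ∑ j ∈ Finset.range r, (w i j) ^ k := by
      rw [hσ]
      simp only [map_sum, map_pow]
      rw [Finset.sum_mul_sum]
      refine Finset.sum_congr rfl fun i _ => Finset.sum_congr rfl fun j _ => ?_
      rw [← mul_pow]
    have h2 : (Complex.normSq (σ k) : ℂ) = (σ k) * (starRingEnd ℂ) (σ k) :=
      (Complex.mul_conj (σ k)).symm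
    have h3 : Complex.normSq (σ k) = ((σ k) * (starRingEnd ℂ) (σ k)).re := by
      rw [← h2, Complex.ofReal_re]
    rw [h3, h1, Complex.re_sum]
    exact Finset.sum_congr rfl fun i _ => Complex.re_sum _ _
  set T : ℝ := ∑ k ∈ Finset.Ico m (m + K), Complex.normSq (σ k) with hT
  have hTlt : T < (K : ℝ) * (1/2) := by
    have hne : (Finset.Ico m (m + K)).Nonempty := Finset.nonempty_Ico.mpr (by omega)
    have := Finset.sum_lt_sum_of_nonempty hne (f := fun k => Complex.normSq (σ k))
      (g := fun _ => (1/2 : ℝ)) ?_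
    · rw [Finset.sum_const, Nat.card_Ico, nsmul_eq_mul] at this
      simpa using this
    · intro k hk
      rw [Finset.mem_Ico] at hk
      have h4 := hcon k hk.1 hk.2
      show Complex.normSq (σ k) < 1/2
      rw [Complex.normSq_eq_norm_sq, Complex.norm_eq_abs]
      have h9 : Complex.abs (σ k) < 1/2 := h4
      nlinarith [Complex.abs.nonneg (σ k)]
  have hpair : ∀ i ∈ Finset.range r, ∀ j ∈ Finset.range r,
      (if u i = u j then (K : ℝ) else 0) - c i j
        ≤ (∑ k ∈ Finset.Ico m (m + K), (w i j) ^ k).re := by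
    intro i hi j hj
    rw [Finset.mem_range] at hi hj
    by_cases h : u i = u j
    · rw [if_pos h, hc]
      simp only [if_pos h, sub_zero]
      rw [hweq i j hi hj h]
      simp [Nat.card_Ico]
    · rw [if_neg h, hc]
      simp only [if_neg h, zero_sub]
      have hw1 : w i j ≠ 1 := hwne i j hi hj h
      have hden : 0 < Complex.abs (w i j - 1) := by
        rw [AbsoluteValue.pos_iff]
        exact sub_ne_zero.mpr hw1
      have habs : Complex.abs (∑ k ∈ Finset.Ico m (m + K), (w i j) ^ k)
          ≤ 2 / Complex.abs (w i j - 1) := by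
        have hgeom : (∑ k ∈ Finset.Ico m (m + K), (w i j) ^ k)
            = (w i j) ^ m * (((w i j) ^ K - 1) / (w i j - 1)) := by
          rw [Finset.sum_Ico_eq_sum_range]
          simp only [add_tsub_cancel_left, pow_add]
          rw [← Finset.mul_sum, geom_sum_eq hw1]
        rw [hgeom, map_mul, map_pow, hwabs i j hi hj, one_pow, one_mul, map_div₀]
        have hnum : Complex.abs ((w i j) ^ K - 1) ≤ 2 := by
          calc Complex.abs ((w i j) ^ K - 1)
              ≤ Complex.abs ((w i j) ^ K) + Complex.abs 1 := by
                simpa [Complex.norm_eq_abs] using norm_sub_le ((w i j) ^ K) (1 : ℂ)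
            _ = 2 := by rw [map_pow, hwabs i j hi hj, one_pow, map_one]; norm_num
        gcongr
      have h5 : |(∑ k ∈ Finset.Ico m (m + K), (w i j) ^ k).re| ≤ Complex.abs (∑ k ∈ Finset.Ico m (m + K), (w i j) ^ k) :=
          Complex.abs_re_le_norm _
      have h6 := neg_abs_le (∑ k ∈ Finset.Ico m (m + K), (w i j) ^ k).re
      linarith
  have hTge : (K : ℝ) - C ≤ T := by
    have hswap : T = ∑ i ∈ Finset.range r, ∑ j ∈ Finset.range r,
        (∑ k ∈ Finset.Ico m (m + K), (w i j) ^ k).re := by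
      rw [hT]
      have : ∀ k, Complex.normSq (σ k)
          = ∑ i ∈ Finset.range r, ∑ j ∈ Finset.range r, ((w i j) ^ k).re := key
      simp_rw [this]
      rw [Finset.sum_comm]
      refine Finset.sum_congr rfl fun i _ => ?_
      rw [Finset.sum_comm]
      refine Finset.sum_congr rfl fun j _ => ?_
      rw [Complex.re_sum]
    have hsum1 : (K : ℝ)
        ≤ ∑ i ∈ Finset.range r, ∑ j ∈ Finset.range r, (if u i = u j then (K : ℝ) else 0) := by
      have hin : (0 : ℕ) ∈ Finset.range r := Finset.mem_range.mpr (by omega)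
      have hnn : ∀ i ∈ Finset.range r,
          0 ≤ ∑ j ∈ Finset.range r, (if u i = u j then (K : ℝ) else 0) := by
        intro i _
        apply Finset.sum_nonneg
        intro j _
        split <;> positivity
      have h7 : (K : ℝ) ≤ ∑ j ∈ Finset.range r, (if u 0 = u j then (K : ℝ) else 0) := by
        have h8 := Finset.single_le_sum (f := fun j => if u 0 = u j then (K : ℝ) else 0)
          (fun j _ => by split <;> positivity) hin
        simpa using h8
      calc (K : ℝ) ≤ ∑ j ∈ Finset.range r, (if u 0 = u j then (K : ℝ) else 0) := h7
        _ ≤ _ := Finset.single_le_sum hnn hin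
    have hsum2 : ∑ i ∈ Finset.range r, ∑ j ∈ Finset.range r, (if u i = u j then (K : ℝ) else 0) - C
        ≤ T := by
      rw [hswap, hC, ← Finset.sum_sub_distrib]
      apply Finset.sum_le_sum
      intro i hi
      rw [← Finset.sum_sub_distrib]
      apply Finset.sum_le_sum
      intro j hj
      exact hpair i hi j hj
    linarith
  have hceil := Nat.le_ceil C
  have hKval : (K : ℝ) = (⌈C⌉₊ : ℝ) * 2 + 2 := by
    rw [hK]
    push_cast
    ring
  linarith

lemma list_sum_eq_range (l : List ℂ) (f : ℂ → ℂ) :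
    (l.map f).sum = ∑ i ∈ Finset.range l.length, f (l.getD i 0) := by
  induction l with
  | nil => simp
  | cons a l ih =>
      rw [List.map_cons, List.sum_cons, ih, List.length_cons, Finset.sum_range_succ']
      simp [add_comm]

lemma psum_window (Rc : Polynomial ℂ) (lam : ℝ) (hlam : 0 < lam)
    (hub : ∀ z ∈ Rc.roots, Complex.abs z ≤ lam)
    (hex : ∃ a ∈ Rc.roots, Complex.abs a = lam) :
    ∃ K k₀ : ℕ, 1 ≤ K ∧ ∀ m, k₀ ≤ m → ∃ k, m ≤ k ∧ k < m + K ∧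
      lam ^ k / 4 ≤ Complex.abs (psum Rc.roots k) := by
  classical
  obtain ⟨a, haR, haabs⟩ := hex
  set T := Rc.roots.filter (fun x => Complex.abs x = lam) with hTdef
  set L := Rc.roots.filter (fun x => ¬ Complex.abs x = lam) with hLdef
  have hTL : T + L = Rc.roots := Multiset.filter_add_not _ _
  have haT : a ∈ T := Multiset.mem_filter.mpr ⟨haR, haabs⟩
  set l := (T.map (fun x => x / (lam : ℂ))).toList with hldef
  have hlen : 1 ≤ l.length := by
    rw [hldef, Multiset.length_toList, Multiset.card_map]
    exact Multiset.card_pos.mpr (fun h0 => by simp [h0] at haT)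
  have hunit : ∀ i, i < l.length → Complex.abs (l.getD i 0) = 1 := by
    intro i hi
    have hmem : l.getD i 0 ∈ l := by
      rw [List.getD_eq_getElem l 0 hi]
      exact List.getElem_mem hi
    have : l.getD i 0 ∈ T.map (fun x => x / (lam : ℂ)) := by
      rw [← Multiset.mem_toList]; exact hmem
    obtain ⟨x, hxT, hx⟩ := Multiset.mem_map.mp this
    have hxlam : Complex.abs x = lam := (Multiset.mem_filter.mp hxT).2
    rw [← hx, map_div₀, hxlam, Complex.abs_ofReal, abs_of_pos hlam, div_self hlam.ne']
  obtain ⟨K, hK1, hwin⟩ := window_lemma l.length hlen (fun i => l.getD i 0) hunit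
  have hL2 : ∃ lam2 : ℝ, 0 ≤ lam2 ∧ lam2 < lam ∧ ∀ x ∈ L, Complex.abs x ≤ lam2 := by
    by_cases hL : L = 0
    · exact ⟨0, le_refl 0, hlam, by simp [hL]⟩
    · set F := (L.map Complex.abs).toFinset with hFdef
      have hFne : F.Nonempty := by
        obtain ⟨x, hx⟩ := Multiset.exists_mem_of_ne_zero hL
        exact ⟨Complex.abs x, Multiset.mem_toFinset.mpr (Multiset.mem_map_of_mem _ hx)⟩
      have hmax := F.max'_mem hFne
      have hmax' : F.max' hFne ∈ (L.map Complex.abs).toFinset := hmax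
      obtain ⟨x0, hx0L, hx0⟩ := Multiset.mem_map.mp (Multiset.mem_toFinset.mp hmax')
      have hx0mem := Multiset.mem_filter.mp hx0L
      refine ⟨F.max' hFne, ?_, ?_, ?_⟩
      · rw [← hx0]; exact AbsoluteValue.nonneg _ _
      · rw [← hx0]
        exact lt_of_le_of_ne (hub x0 hx0mem.1) hx0mem.2
      · intro x hxL
        exact F.le_max' _ (Multiset.mem_toFinset.mpr (Multiset.mem_map_of_mem _ hxL))
  obtain ⟨lam2, h20, h2lt, h2b⟩ := hL2
  have hdecay : ∀ᶠ k in Filter.atTop,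
      (Multiset.card Rc.roots : ℝ) * lam2 ^ k ≤ lam ^ k / 4 := by
    have h0le : 0 ≤ lam2 / lam := by positivity
    have h0 : lam2 / lam < 1 := (div_lt_one hlam).mpr h2lt
    have htd := (tendsto_pow_atTop_nhds_zero_of_lt_one h0le h0).const_mul
      (Multiset.card Rc.roots : ℝ)
    rw [mul_zero] at htd
    have hev := htd.eventually_lt_const (show (0:ℝ) < 1/4 by norm_num)
    filter_upwards [hev] with k hk
    have hlk : 0 < lam ^ k := pow_pos hlam k
    rw [div_pow] at hk
    have := mul_lt_mul_of_pos_right hk hlk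
    calc (Multiset.card Rc.roots : ℝ) * lam2 ^ k
        = (Multiset.card Rc.roots : ℝ) * (lam2 ^ k / lam ^ k) * lam ^ k := by
          field_simp
      _ ≤ 1/4 * lam ^ k := le_of_lt this
      _ = lam ^ k / 4 := by ring
  obtain ⟨k₀, hk₀⟩ := Filter.eventually_atTop.mp hdecay
  refine ⟨K, k₀, hK1, ?_⟩
  intro m hm
  obtain ⟨k, hk1, hk2, hk3⟩ := hwin m
  refine ⟨k, hk1, hk2, ?_⟩
  have hσ : (∑ i ∈ Finset.range l.length, (l.getD i 0) ^ k) = psum T k * (((lam : ℂ)) ^ k)⁻¹ := by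
    rw [← list_sum_eq_range l (fun x => x ^ k)]
    calc (l.map (fun x => x ^ k)).sum
        = ((l.map (fun x => x ^ k) : Multiset ℂ)).sum := by rw [Multiset.sum_coe]
      _ = (((l : Multiset ℂ)).map (fun x => x ^ k)).sum := by rw [Multiset.map_coe]
      _ = ((T.map (fun x => x / (lam : ℂ))).map (fun x => x ^ k)).sum := by
          rw [hldef, Multiset.coe_toList]
      _ = (T.map (fun x => x ^ k * (((lam : ℂ)) ^ k)⁻¹)).sum := by
          rw [Multiset.map_map]
          congr 1
          exact Multiset.map_congr rfl fun x _ => by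
            show (x / (lam : ℂ)) ^ k = x ^ k * ((lam : ℂ) ^ k)⁻¹
            rw [div_pow, div_eq_mul_inv]
      _ = psum T k * (((lam : ℂ)) ^ k)⁻¹ := by
          rw [psum, ← Multiset.sum_map_mul_right]
  have hlamk : Complex.abs (((lam : ℂ)) ^ k)⁻¹ = (lam ^ k)⁻¹ := by
    rw [map_inv₀, map_pow, Complex.abs_ofReal, abs_of_pos hlam]
  have hTbig : lam ^ k / 2 ≤ Complex.abs (psum T k) := by
    have := hk3
    rw [hσ, map_mul, hlamk] at this
    have hlk : 0 < lam ^ k := pow_pos hlam k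
    have h6 : 1/2 * lam ^ k ≤ Complex.abs (psum T k) * (lam ^ k)⁻¹ * lam ^ k :=
      mul_le_mul_of_nonneg_right this hlk.le
    rw [mul_assoc, inv_mul_cancel₀ hlk.ne', mul_one] at h6
    linarith
  have hLsmall : Complex.abs (psum L k) ≤ lam ^ k / 4 := by
    have h1 : ‖(L.map (fun x => x ^ k)).sum‖ ≤ ((L.map (fun x => x ^ k)).map norm).sum :=
      norm_multiset_sum_le _
    have h2 : ((L.map (fun x => x ^ k)).map norm).sum
        ≤ (Multiset.card ((L.map (fun x => x ^ k)).map norm)) • (lam2 ^ k) := by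
      apply Multiset.sum_le_card_nsmul
      intro x hx
      rw [Multiset.map_map] at hx
      obtain ⟨y, hyL, hy⟩ := Multiset.mem_map.mp hx
      rw [← hy]
      simp only [Function.comp_apply, norm_pow, Complex.norm_eq_abs]
      exact pow_le_pow_left₀ (AbsoluteValue.nonneg _ _) (h2b y hyL) k
    have h3 : (Multiset.card ((L.map (fun x => x ^ k)).map norm) : ℝ) ≤
        (Multiset.card Rc.roots : ℝ) := by
      rw [Multiset.card_map, Multiset.card_map]
      have : L ≤ Rc.roots := Multiset.filter_le _ _
      exact_mod_cast Multiset.card_le_card this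
    have h4 : (0:ℝ) ≤ lam2 ^ k := pow_nonneg h20 k
    have h5 := hk₀ k (le_trans hm hk1)
    calc Complex.abs (psum L k) = ‖(L.map (fun x => x ^ k)).sum‖ := by
          rw [psum, Complex.norm_eq_abs]
      _ ≤ (Multiset.card ((L.map (fun x => x ^ k)).map norm)) • (lam2 ^ k) := le_trans h1 h2
      _ = (Multiset.card ((L.map (fun x => x ^ k)).map norm) : ℝ) * (lam2 ^ k) := by
          rw [nsmul_eq_mul]
      _ ≤ (Multiset.card Rc.roots : ℝ) * lam2 ^ k := by
          exact mul_le_mul_of_nonneg_right h3 h4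
      _ ≤ lam ^ k / 4 := h5
  have hsplit : psum Rc.roots k = psum T k + psum L k := by
    rw [← hTL, psum, Multiset.map_add, Multiset.sum_add]
    rfl
  have htri : Complex.abs (psum T k)
      ≤ Complex.abs (psum Rc.roots k) + Complex.abs (psum L k) := by
    rw [hsplit]
    calc Complex.abs (psum T k) = Complex.abs ((psum T k + psum L k) - psum L k) := by ring_nf
      _ ≤ Complex.abs (psum T k + psum L k) + Complex.abs (psum L k) := by
          simpa [Complex.norm_eq_abs] using norm_sub_le (psum T k + psum L k) (psum L k)
  linarith

lemma prod_ge_pow (M : Multiset ℝ) (e : ℝ) (he : 0 ≤ e) (h : ∀ x ∈ M, e ≤ x) :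
    e ^ Multiset.card M ≤ M.prod := by
  induction M using Multiset.induction with
  | empty => simp
  | cons a M ih =>
      have ha := h a (Multiset.mem_cons_self a M)
      have hM := ih (fun x hx => h x (Multiset.mem_cons_of_mem hx))
      rw [Multiset.card_cons, Multiset.prod_cons, pow_succ']
      exact mul_le_mul ha hM (pow_nonneg he _) (le_trans he ha)

lemma eval_S_bound (Sc : Polynomial ℂ) (z : ℂ) (hz : 1 ≤ Complex.abs z) :
    Complex.abs (Sc.eval z)
      ≤ (∑ j ∈ Finset.range (Sc.natDegree + 1), Complex.abs (Sc.coeff j))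
        * Complex.abs z ^ Sc.natDegree := by
  rw [Polynomial.eval_eq_sum_range]
  calc Complex.abs (∑ j ∈ Finset.range (Sc.natDegree + 1), Sc.coeff j * z ^ j)
      ≤ ∑ j ∈ Finset.range (Sc.natDegree + 1), Complex.abs (Sc.coeff j * z ^ j) := by
        simpa [Complex.norm_eq_abs] using
          norm_sum_le (Finset.range (Sc.natDegree + 1)) (fun j => Sc.coeff j * z ^ j)
    _ ≤ ∑ j ∈ Finset.range (Sc.natDegree + 1),
          Complex.abs (Sc.coeff j) * Complex.abs z ^ Sc.natDegree := by
        apply Finset.sum_le_sum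
        intro j hj
        rw [map_mul, map_pow]
        apply mul_le_mul_of_nonneg_left ?_ (AbsoluteValue.nonneg _ _)
        exact pow_le_pow_right₀ hz (Nat.lt_succ_iff.mp (Finset.mem_range.mp hj))
    _ = _ := by rw [← Finset.sum_mul]

lemma root_upper (Rc Sc : Polynomial ℂ) (hRc : Rc.Monic) (lam rho : ℝ)
    (hrho1 : 1 < rho) (hub : ∀ z ∈ Rc.roots, Complex.abs z ≤ lam) (hlamrho : lam < rho) :
    ∃ N : ℕ, ∀ n, N ≤ n → ∀ z : ℂ,
      (Polynomial.X ^ n * Rc + Sc).eval z = 0 → Complex.abs z ≤ rho := by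
  set dS := Sc.natDegree
  set CS := ∑ j ∈ Finset.range (dS + 1), Complex.abs (Sc.coeff j) with hCS
  have hCS0 : 0 ≤ CS := Finset.sum_nonneg fun j _ => AbsoluteValue.nonneg _ _
  set em := min (rho - lam) 1 with hem
  have hem0 : 0 < em := lt_min (by linarith) one_pos
  have hem1 : em ≤ 1 := min_le_right _ _
  set d := Rc.natDegree
  obtain ⟨M₀, hM₀⟩ := Filter.eventually_atTop.mp
    ((tendsto_pow_atTop_atTop_of_one_lt hrho1).eventually_ge_atTop (CS / em ^ d + 1))
  refine ⟨M₀ + dS, fun n hn z hz => ?_⟩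
  by_contra hgt
  push_neg at hgt
  have hz1 : 1 ≤ Complex.abs z := le_of_lt (lt_trans hrho1 hgt)
  have hzrho : rho ≤ Complex.abs z := le_of_lt hgt
  -- root equation
  rw [Polynomial.eval_add, Polynomial.eval_mul, Polynomial.eval_pow, Polynomial.eval_X] at hz
  have heq : Complex.abs z ^ n * Complex.abs (Rc.eval z) = Complex.abs (Sc.eval z) := by
    have : z ^ n * Rc.eval z = - Sc.eval z := by linear_combination hz
    rw [← map_pow, ← map_mul, this, map_neg_eq_map]
  -- lower bound for |Rc.eval z|
  have hRceval : Rc = (Rc.roots.map (fun x => Polynomial.X - Polynomial.C x)).prod :=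
    (IsAlgClosed.splits Rc).eq_prod_roots_of_monic hRc
  have hRlow : em ^ d ≤ Complex.abs (Rc.eval z) := by
    have h1 : Rc.eval z = ((Rc.roots.map (fun x => Polynomial.X - Polynomial.C x)).map
        (Polynomial.eval z)).prod := by
      conv_lhs => rw [hRceval]
      rw [Polynomial.eval_multiset_prod]
    rw [h1]
    have h2 : Complex.abs (((Rc.roots.map (fun x => Polynomial.X - Polynomial.C x)).map
        (Polynomial.eval z)).prod)
        = ((Rc.roots.map (fun x => Complex.abs (z - x)))).prod := by
      rw [map_multiset_prod, Multiset.map_map, Multiset.map_map]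
      exact congrArg _ (Multiset.map_congr rfl fun x _ => by simp)
    rw [h2]
    have h3 : ∀ y ∈ Rc.roots.map (fun x => Complex.abs (z - x)), em ≤ y := by
      intro y hy
      obtain ⟨x, hxR, hx⟩ := Multiset.mem_map.mp hy
      have hxlam := hub x hxR
      have htri : Complex.abs z - Complex.abs x ≤ Complex.abs (z - x) := by
        simpa [Complex.norm_eq_abs] using norm_sub_norm_le z x
      rw [← hx]
      have : em ≤ rho - lam := min_le_left _ _
      linarith
    calc em ^ d ≤ em ^ Multiset.card (Rc.roots.map (fun x => Complex.abs (z - x))) := by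
          apply pow_le_pow_of_le_one hem0.le hem1
          rw [Multiset.card_map]
          exact Polynomial.card_roots' Rc
      _ ≤ _ := prod_ge_pow _ em hem0.le h3
  -- combine
  have hS := eval_S_bound Sc z hz1
  have hpow : Complex.abs z ^ n = Complex.abs z ^ (n - dS) * Complex.abs z ^ dS := by
    rw [← pow_add]
    congr 1
    omega
  have hzdS : 0 < Complex.abs z ^ dS := pow_pos (by linarith) _
  have hkey : em ^ d * Complex.abs z ^ (n - dS) ≤ CS := by
    have h4 : em ^ d * (Complex.abs z ^ (n - dS) * Complex.abs z ^ dS)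
        ≤ CS * Complex.abs z ^ dS := by
      calc em ^ d * (Complex.abs z ^ (n - dS) * Complex.abs z ^ dS)
          = em ^ d * Complex.abs z ^ n := by rw [← hpow]
        _ ≤ Complex.abs (Rc.eval z) * Complex.abs z ^ n := by
            apply mul_le_mul_of_nonneg_right hRlow (pow_nonneg (by linarith) _)
        _ = Complex.abs z ^ n * Complex.abs (Rc.eval z) := by ring
        _ = Complex.abs (Sc.eval z) := heq
        _ ≤ CS * Complex.abs z ^ dS := hS
    have := (mul_le_mul_iff_left₀ hzdS).mp (by linarith [h4] : em ^ d * Complex.abs z ^ (n - dS) * Complex.abs z ^ dS ≤ CS * Complex.abs z ^ dS)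
    exact this
  have hrhopow : CS / em ^ d + 1 ≤ rho ^ (n - dS) := hM₀ (n - dS) (by omega)
  have hzpow : rho ^ (n - dS) ≤ Complex.abs z ^ (n - dS) :=
    pow_le_pow_left₀ (by linarith) hzrho _
  have hemd : 0 < em ^ d := pow_pos hem0 _
  have : CS / em ^ d + 1 ≤ CS / em ^ d := by
    calc CS / em ^ d + 1 ≤ rho ^ (n - dS) := hrhopow
      _ ≤ Complex.abs z ^ (n - dS) := hzpow
      _ ≤ CS / em ^ d := by
          rw [le_div_iff₀ hemd]
          linarith [hkey]
  linarith

lemma maxRootAbs_spec (f : Polynomial ℤ) (hfc : f.map (algebraMap ℤ ℂ) ≠ 0)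
    (hne : ∃ z : ℂ, (f.map (algebraMap ℤ ℂ)).eval z = 0) :
    (∃ z : ℂ, (f.map (algebraMap ℤ ℂ)).eval z = 0 ∧ maxRootAbs f = Complex.abs z)
    ∧ ∀ z : ℂ, (f.map (algebraMap ℤ ℂ)).eval z = 0 → Complex.abs z ≤ maxRootAbs f := by
  classical
  set fc := f.map (algebraMap ℤ ℂ) with hfcdef
  have hset0 : {z : ℂ | Polynomial.aeval z f = 0} = ↑fc.roots.toFinset := by
    ext z
    constructor
    · intro hz
      have hz' : Polynomial.aeval z f = 0 := hz
      rw [Finset.mem_coe, Multiset.mem_toFinset, Polynomial.mem_roots']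
      refine ⟨hfc, ?_⟩
      rw [Polynomial.IsRoot.def, hfcdef, Polynomial.eval_map]
      exact hz'
    · intro hz
      rw [Finset.mem_coe, Multiset.mem_toFinset, Polynomial.mem_roots'] at hz
      show Polynomial.aeval z f = 0
      rw [Polynomial.aeval_def, ← Polynomial.eval_map]
      exact hz.2
  have hset : Complex.abs '' {z : ℂ | Polynomial.aeval z f = 0}
      = ↑(fc.roots.toFinset.image Complex.abs) := by
    rw [hset0, ← Finset.coe_image]
  obtain ⟨z0, hz0⟩ := hne
  have hz0r : z0 ∈ fc.roots.toFinset :=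
    Multiset.mem_toFinset.mpr (Polynomial.mem_roots'.mpr ⟨hfc, hz0⟩)
  have hFne : (fc.roots.toFinset.image Complex.abs).Nonempty :=
    ⟨_, Finset.mem_image_of_mem _ hz0r⟩
  have hmem : maxRootAbs f ∈ fc.roots.toFinset.image Complex.abs := by
    rw [maxRootAbs, show (fun z : ℂ => ‖z‖) = ⇑Complex.abs from rfl, hset]
    exact hFne.csSup_mem
  constructor
  · obtain ⟨z, hz, hze⟩ := Finset.mem_image.mp hmem
    exact ⟨z, (Polynomial.mem_roots'.mp (Multiset.mem_toFinset.mp hz)).2, hze.symm⟩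
  · intro z hz
    rw [maxRootAbs, show (fun z : ℂ => ‖z‖) = ⇑Complex.abs from rfl, hset]
    exact le_csSup (Finset.bddAbove _) (Finset.mem_coe.mpr (Finset.mem_image_of_mem _
      (Multiset.mem_toFinset.mpr (Polynomial.mem_roots'.mpr ⟨hfc, hz⟩))))

/-- If `R` is monic with a root outside the unit circle and `Q_n = t^n R + S`, then
`λ(Q_n) → λ(R)` as `n → ∞`. -/
theorem maxRootAbs_tendsto (R S : Polynomial ℤ) (hR : R.Monic)
    (hroot : ∃ θ : ℂ, Polynomial.aeval θ R = 0 ∧ 1 < ‖θ‖) :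
    ∀ ε : ℝ, 0 < ε → ∃ N : ℕ, 1 ≤ N ∧ ∀ n : ℕ, N ≤ n →
      0 < (X ^ n * R + S).natDegree ∧
      |maxRootAbs (X ^ n * R + S) - maxRootAbs R| < ε := by
  classical
  intro ε hε
  obtain ⟨θ, hθ, hθ1⟩ := hroot
  set Rc := R.map (algebraMap ℤ ℂ) with hRcdef
  set Sc := S.map (algebraMap ℤ ℂ) with hScdef
  have hRcm : Rc.Monic := hR.map _
  have hRcne : Rc ≠ 0 := hRcm.ne_zero
  set d := R.natDegree with hd
  set dS := S.natDegree with hdS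
  have hdc : Rc.natDegree = d := hR.natDegree_map _
  have hdSc : Sc.natDegree ≤ dS := natDegree_map_le
  have hd1 : 1 ≤ d := by
    by_contra h
    push_neg at h
    have hd0 : R.natDegree = 0 := by omega
    have : R = 1 := hR.natDegree_eq_zero.mp hd0
    rw [this] at hθ
    simp at hθ
  have hθR : θ ∈ Rc.roots := by
    rw [Polynomial.mem_roots']
    refine ⟨hRcne, ?_⟩
    rw [Polynomial.IsRoot.def, hRcdef, Polynomial.eval_map]
    exact hθ
  set lam := maxRootAbs R with hlam
  have hRspec := maxRootAbs_spec R hRcne ⟨θ, by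
    rw [Polynomial.eval_map]
    exact hθ⟩
  obtain ⟨⟨α0, hα0root, hα0⟩, hlam_ub'⟩ := hRspec
  have hlam_ub : ∀ z ∈ Rc.roots, Complex.abs z ≤ lam := by
    intro z hz
    exact hlam_ub' z (Polynomial.mem_roots'.mp hz).2
  have hαR : α0 ∈ Rc.roots := Polynomial.mem_roots'.mpr ⟨hRcne, hα0root⟩
  have hlam1 : 1 < lam := lt_of_lt_of_le hθ1 (hlam_ub θ hθR)
  have hlam0 : 0 < lam := by linarith
  -- window for psums of R
  obtain ⟨K, k₀, hK1, hwin⟩ := psum_window Rc lam hlam0 hlam_ub ⟨α0, hαR, hα0.symm⟩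
  set k₁ := max k₀ 1 with hk₁
  -- upper bound
  obtain ⟨N₁, hN₁⟩ := root_upper Rc Sc hRcm lam (lam + ε/2) (by linarith) hlam_ub (by linarith)
  -- mu for lower bound
  set mu := max (lam - ε/2) (lam/2) with hmu
  have hmu0 : 0 < mu := lt_of_lt_of_le (by linarith : (0:ℝ) < lam/2) (le_max_right _ _)
  have hmulam : mu < lam := max_lt (by linarith) (by linarith)
  have hmuge : lam - ε/2 ≤ mu := le_max_left _ _
  set r := mu / lam with hr
  have hr0 : 0 ≤ r := by positivity
  have hr1 : r < 1 := (div_lt_one hlam0).mpr hmulam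
  -- E4 eventual bound
  have hE4m : ∀ᶠ m : ℕ in Filter.atTop, ((d:ℝ) + 2) * ((m:ℝ) + 1) * r ^ m < 1/4 := by
    have hs : Filter.Tendsto (fun m : ℕ => ((m:ℝ)) * r ^ m) Filter.atTop (nhds 0) := by
      have := summable_pow_mul_geometric_of_norm_lt_one 1 (by
        rw [Real.norm_eq_abs, abs_of_nonneg hr0]; exact hr1)
      have h2 := this.tendsto_atTop_zero
      simpa using h2
    have hs2 : Filter.Tendsto (fun m : ℕ => r ^ m) Filter.atTop (nhds 0) :=
      tendsto_pow_atTop_nhds_zero_of_lt_one hr0 hr1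
    have hs3 : Filter.Tendsto (fun m : ℕ => ((d:ℝ) + 2) * (((m:ℝ)) * r ^ m + r ^ m))
        Filter.atTop (nhds 0) := by
      have := (hs.add hs2).const_mul ((d:ℝ) + 2)
      simpa using this
    have := hs3.eventually_lt_const (show (0:ℝ) < 1/4 by norm_num)
    filter_upwards [this] with m hm
    calc ((d:ℝ) + 2) * ((m:ℝ) + 1) * r ^ m
        = ((d:ℝ) + 2) * (((m:ℝ)) * r ^ m + r ^ m) := by ring
      _ < 1/4 := hm
  have hhalf : Filter.Tendsto (fun n : ℕ => n / 2) Filter.atTop Filter.atTop :=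
    Filter.tendsto_atTop_atTop.mpr (fun b => ⟨2 * b, fun n hn => by omega⟩)
  have hE4 : ∀ᶠ n : ℕ in Filter.atTop, ((n:ℝ) + (d:ℝ)) * r ^ (n / 2) < 1/4 := by
    filter_upwards [hhalf.eventually hE4m, Filter.eventually_ge_atTop 1] with n hm hn1
    have hble : (n:ℝ) + d ≤ ((d:ℝ) + 2) * ((n/2 : ℕ) + 1) := by
      have h1 : (n : ℝ) ≤ 2 * ((n/2 : ℕ) : ℝ) + 1 := by
        have : n ≤ 2 * (n/2) + 1 := by omega
        exact_mod_cast this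
      have h2 : (0:ℝ) ≤ ((n/2 : ℕ) : ℝ) := by positivity
      have h3 : (0:ℝ) ≤ (d : ℝ) := by positivity
      nlinarith
    have hrm : 0 ≤ r ^ (n/2) := pow_nonneg hr0 _
    nlinarith [hm]
  -- collect eventual conditions
  have hEall : ∀ᶠ n in Filter.atTop,
      (dS + 1 ≤ n + d ∧ N₁ ≤ n ∧ k₁ + n/2 + K + dS + 1 < n + d
        ∧ ((n:ℝ) + d) * r ^ (n / 2) < 1/4) := by
    filter_upwards [Filter.eventually_ge_atTop (dS + 1), Filter.eventually_ge_atTop N₁,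
      Filter.eventually_ge_atTop (2 * (k₁ + K + dS + 2)), hE4] with n h1 h2 h3 h4
    exact ⟨by omega, h2, by omega, h4⟩
  obtain ⟨N₀, hN₀⟩ := Filter.eventually_atTop.mp hEall
  refine ⟨N₀ + 1, by omega, ?_⟩
  intro n hn
  obtain ⟨hc1, hc2, hc3, hc4⟩ := hN₀ n (by omega)
  -- basic structure of Q_n
  have hqZ := qn_monic R S hR n (by omega)
  have hqC := qn_monic Rc Sc hRcm n (by rw [hdc]; omega)
  set Qc : Polynomial ℂ := X ^ n * Rc + Sc with hQc
  have hQcm : Qc.Monic := hqC.1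
  have hQcd : Qc.natDegree = n + d := by rw [hqC.2, hdc]
  have hQcne : Qc ≠ 0 := hQcm.ne_zero
  have hmapQ : (X ^ n * R + S).map (algebraMap ℤ ℂ) = Qc := by
    rw [Polynomial.map_add, Polynomial.map_mul, Polynomial.map_pow, Polynomial.map_X]
  have hdegpos : 0 < (X ^ n * R + S).natDegree := by
    rw [hqZ.2]
    omega
  refine ⟨hdegpos, ?_⟩
  -- roots exist
  have hQdeg0 : Qc.degree ≠ 0 := by
    rw [Polynomial.degree_eq_natDegree hQcne, hQcd]
    exact_mod_cast (by omega : (n + d : ℕ) ≠ 0)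
  obtain ⟨z0, hz0⟩ := IsAlgClosed.exists_root Qc hQdeg0
  rw [Polynomial.IsRoot.def] at hz0
  have hQspec := maxRootAbs_spec (X ^ n * R + S) (by rw [hmapQ]; exact hQcne)
    ⟨z0, by rw [hmapQ]; exact hz0⟩
  obtain ⟨⟨zmax, hzmax, hzmaxeq⟩, hQub⟩ := hQspec
  rw [hmapQ] at hzmax
  set MQ := maxRootAbs (X ^ n * R + S) with hMQ
  -- upper bound for MQ
  have hupper : MQ ≤ lam + ε/2 := by
    rw [hzmaxeq]
    exact hN₁ n hc2 zmax hzmax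
  -- lower bound for MQ
  have hlower : lam - ε/2 ≤ MQ := by
    by_cases hμ : lam - ε/2 ≤ 0
    · calc lam - ε/2 ≤ 0 := hμ
        _ ≤ Complex.abs z0 := AbsoluteValue.nonneg _ _
        _ ≤ MQ := hQub z0 (by rw [hmapQ]; exact hz0)
    push_neg at hμ
    by_contra hcon
    push_neg at hcon
    -- all roots of Qc are < lam - ε/2 ≤ mu
    have hallroots : ∀ z ∈ Qc.roots, Complex.abs z ≤ mu := by
      intro z hz
      have hzroot := (Polynomial.mem_roots'.mp hz).2
      have := hQub z (by rw [hmapQ]; exact hzroot)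
      by_contra hgt
      push_neg at hgt
      have : MQ < MQ := by
        calc MQ < lam - ε/2 := hcon
          _ ≤ mu := hmuge
          _ < Complex.abs z := hgt
          _ ≤ MQ := this
      exact lt_irrefl _ this
    -- window k
    obtain ⟨k, hk1, hk2, hk3⟩ := hwin (k₁ + n/2) (le_trans (le_max_left _ _) le_self_add)
    have hkge1 : 1 ≤ k := le_trans (le_trans (le_max_right k₀ 1) le_self_add) hk1
    -- psum equality
    have hpeq := psum_roots_eq Rc Sc hRcm n (by rw [hdc]; omega) k hkge1 (by rw [hdc]; omega)
    -- bound on psum of Qc roots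
    have hcard : (Multiset.card Qc.roots : ℝ) ≤ (n : ℝ) + d := by
      have := Polynomial.card_roots' Qc
      rw [hQcd] at this
      exact_mod_cast this
    have hpbound : Complex.abs (psum Qc.roots k) ≤ ((n:ℝ) + d) * mu ^ k := by
      have h1 : ‖(Qc.roots.map (fun x => x ^ k)).sum‖
          ≤ ((Qc.roots.map (fun x => x ^ k)).map norm).sum := norm_multiset_sum_le _
      have h2 : ((Qc.roots.map (fun x => x ^ k)).map norm).sum
          ≤ (Multiset.card ((Qc.roots.map (fun x => x ^ k)).map norm)) • (mu ^ k) := by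
        apply Multiset.sum_le_card_nsmul
        intro x hx
        rw [Multiset.map_map] at hx
        obtain ⟨y, hyQ, hy⟩ := Multiset.mem_map.mp hx
        rw [← hy]
        simp only [Function.comp_apply, norm_pow, Complex.norm_eq_abs]
        exact pow_le_pow_left₀ (AbsoluteValue.nonneg _ _) (hallroots y hyQ) k
      have h3 : (Multiset.card ((Qc.roots.map (fun x => x ^ k)).map norm) : ℝ) * mu ^ k
          ≤ ((n:ℝ) + d) * mu ^ k := by
        apply mul_le_mul_of_nonneg_right ?_ (pow_nonneg hmu0.le _)
        rw [Multiset.card_map, Multiset.card_map]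
        exact hcard
      calc Complex.abs (psum Qc.roots k) = ‖(Qc.roots.map (fun x => x ^ k)).sum‖ := by
            rw [psum, Complex.norm_eq_abs]
        _ ≤ (Multiset.card ((Qc.roots.map (fun x => x ^ k)).map norm)) • (mu ^ k) :=
            le_trans h1 h2
        _ = (Multiset.card ((Qc.roots.map (fun x => x ^ k)).map norm) : ℝ) * mu ^ k := by
            rw [nsmul_eq_mul]
        _ ≤ ((n:ℝ) + d) * mu ^ k := h3
    -- numeric contradiction
    have hlamk : 0 < lam ^ k := pow_pos hlam0 _
    have hrk : r ^ k ≤ r ^ (n/2) := by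
      apply pow_le_pow_of_le_one hr0 hr1.le
      omega
    have hmuk : mu ^ k = r ^ k * lam ^ k := by
      rw [hr, div_pow]
      field_simp
    have hfinal : ((n:ℝ) + d) * mu ^ k < lam ^ k / 4 := by
      have hnd0 : (0:ℝ) ≤ (n:ℝ) + d := by positivity
      calc ((n:ℝ) + d) * mu ^ k = (((n:ℝ) + d) * r ^ k) * lam ^ k := by
            rw [hmuk]; ring
        _ ≤ (((n:ℝ) + d) * r ^ (n/2)) * lam ^ k := by
            apply mul_le_mul_of_nonneg_right ?_ hlamk.le
            exact mul_le_mul_of_nonneg_left hrk hnd0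
        _ < (1/4) * lam ^ k := by
            exact mul_lt_mul_of_pos_right hc4 hlamk
        _ = lam ^ k / 4 := by ring
    rw [hpeq] at hpbound
    linarith
  rw [abs_lt]
  constructor <;> linarith
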